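/- Let K₃ = ℚ(α) where α is a primitive third root of unity. The vector x₀ = (10+8α, −7, 0, 0, 7, 0, 0) ∈ K₃⁷ satisfies Σ_{i,k} Q_{ik} (x₀)_i (x₀)_k = 0, and the set of one-dimensional K₃-subspaces L of K₃⁷ such that Σ_{i,k} Q_{ik} x_i x_k = 0 for all x ∈ L is infinite (i.e., the smooth quadric x Q xᵀ = 0 has infinitely many projective points over ℚ(α)). -/
import Mathlib


noncomputable section

/-- The field K₃ = ℚ(α), α a primitive third root of unity. -/
abbrev K3 : Type := CyclotomicField 3 ℚ

/-- The symmetric matrix Q, viewed over K₃. -/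
def QK : Matrix (Fin 7) (Fin 7) K3 :=
  !![7,3,3,1,-3,-3,-5; 3,7,3,3,1,-3,-3; 3,3,7,3,3,1,-3; 1,3,3,7,3,3,1;
     -3,1,3,3,7,3,3; -3,-3,1,3,3,7,3; -5,-3,-3,1,3,3,7]

/-- The quadratic form `q(x) = Σ_{i,k} Q_{ik} xᵢ xₖ` on K₃⁷. -/
def quadK (x : Fin 7 → K3) : K3 := ∑ i : Fin 7, ∑ k : Fin 7, QK i k * x i * x k

/-- The point x₀ = (10+8α, −7, 0, 0, 7, 0, 0). -/
def x₀ (α : K3) : Fin 7 → K3 := ![10 + 8 * α, -7, 0, 0, 7, 0, 0]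

/-- A second isotropic vector, orthogonal to x₀, supported on coordinates 0, 1, 6. -/
def wv (α : K3) : Fin 7 → K3 := ![30 - 4 * α, 14 + 28 * α, 0, 0, 0, 0, 28]

lemma quadK_smul (c : K3) (y : Fin 7 → K3) : quadK (c • y) = c ^ 2 * quadK y := by
  simp only [quadK, Pi.smul_apply, smul_eq_mul, Finset.mul_sum]
  exact Finset.sum_congr rfl fun i _ => Finset.sum_congr rfl fun k _ => by ring

lemma key (α : K3) (h3 : α ^ 2 + α + 1 = 0) (t : K3) :
    quadK (x₀ α + t • wv α) = 0 := by
  simp only [quadK, QK, x₀, wv, Fin.sum_univ_succ, Fin.sum_univ_zero, Pi.add_apply,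
    Pi.smul_apply, smul_eq_mul, Matrix.cons_val_zero, Matrix.cons_val_one, Matrix.head_cons,
    Matrix.cons_val_succ, Matrix.of_apply, Matrix.cons_val', Matrix.empty_val',
    Matrix.cons_val_fin_one, Matrix.head_fin_const]
  linear_combination (448 + 896 * t + 4928 * t ^ 2) * h3

/-- The point x₀ lies on the quadric `x Q xᵀ = 0`, and the quadric has infinitely many
projective points over K₃ = ℚ(α): the set of one-dimensional K₃-subspaces of K₃⁷ on
which q vanishes is infinite. -/
theorem quadric_has_infinitely_many_points (α : K3) (hα : IsPrimitiveRoot α 3) :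
    quadK (x₀ α) = 0 ∧
      {L : Submodule K3 (Fin 7 → K3) |
        Module.finrank K3 L = 1 ∧ ∀ x ∈ L, quadK x = 0}.Infinite := by
  have h3 : α ^ 2 + α + 1 = 0 := by
    have hcube : α ^ 3 = 1 := hα.pow_eq_one
    have hne : α ≠ 1 := hα.ne_one (by norm_num)
    have : (α - 1) * (α ^ 2 + α + 1) = 0 := by linear_combination hcube
    rcases mul_eq_zero.mp this with h | h
    · exact absurd (sub_eq_zero.mp h) hne
    · exact h
  have hx0 : quadK (x₀ α) = 0 := by
    have := key α h3 0
    simpa using this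
  refine ⟨hx0, ?_⟩
  have hval4 : ∀ t : K3, (x₀ α + t • wv α) 4 = 7 := by
    intro t
    simp [x₀, wv, Matrix.cons_val_succ]
  have hval6 : ∀ t : K3, (x₀ α + t • wv α) 6 = t * 28 := by
    intro t
    have e1 : (x₀ α) 6 = 0 := rfl
    have e2 : (wv α) 6 = 28 := rfl
    simp [Pi.add_apply, Pi.smul_apply, smul_eq_mul, e1, e2]
  have hne : ∀ t : K3, x₀ α + t • wv α ≠ 0 := by
    intro t h
    have := congrFun h 4
    rw [hval4 t] at this
    simp at this
  apply Set.infinite_of_injective_forall_mem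
    (f := fun t : K3 => Submodule.span K3 {x₀ α + t • wv α})
  · intro t t' h
    have hmem : x₀ α + t • wv α ∈ Submodule.span K3 {x₀ α + t' • wv α} := by
      beta_reduce at h
      rw [← h]; exact Submodule.mem_span_singleton_self _
    obtain ⟨c, hc⟩ := Submodule.mem_span_singleton.mp hmem
    have h4 := congrFun hc 4
    simp only [Pi.smul_apply, smul_eq_mul, hval4] at h4
    have hc1 : c = 1 := by linear_combination h4 / 7
    have h6 := congrFun hc 6
    simp only [Pi.smul_apply, smul_eq_mul, hval6, hc1, one_mul] at h6
    linear_combination h6 / (-28)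
  · intro t
    refine ⟨finrank_span_singleton (hne t), ?_⟩
    intro x hx
    obtain ⟨c, hc⟩ := Submodule.mem_span_singleton.mp hx
    rw [← hc, quadK_smul, key α h3 t, mul_zero]

end
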